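/- (Schur-complement form of the linearization at equilibrium) Let (E_L, E_I) ∈ ℝ^n_{>0} × ℝ^m_{>0} be an equilibrium of the quadratic-droop closed loop with differentiable load functions Q_i. Let E = (E_L, E_I), let D be the diagonal matrix with D_{ii} = dQ_i/dE_i(E_{L,i}) for loads i ∈ L and D_{ii} = K_i(2E_i − E_i*) for inverters i ∈ I, and set M := B + [E]^{−1}([B E] + D). Then M has the block form M = [[M_{11}, B_LI],[B_IL, B_II + K_I]] with M_{11} = [E_L]^{−1}(∂Q_L/∂E_L)(E_L) + B_LL + [E_L]^{−1}[B_red(E_L − E_L*)], and the Schur complement of M with respect to the block B_II + K_I satisfies M_{11} − B_LI(B_II+K_I)^{−1}B_IL = [E_L]^{−1}J_red(E_L). -/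

import Mathlib

open Matrix

def suscGraph {V : Type*} (B : Matrix V V ℝ) : SimpleGraph V where
  Adj i j := i ≠ j ∧ 0 < B i j ∧ 0 < B j i
  symm := ⟨fun _ _ h => ⟨h.1.symm, h.2.2, h.2.1⟩⟩
  loopless := ⟨fun _ h => h.1 rfl⟩

def IsSusceptance {V : Type*} [Fintype V] [DecidableEq V] (B : Matrix V V ℝ) : Prop :=
  B.IsSymm ∧ (∀ i j, i ≠ j → 0 ≤ B i j) ∧
    (∀ i, B i i = -∑ j ∈ Finset.univ.erase i, B i j) ∧ (suscGraph B).Connected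

/-- Schur-complement form of the linearization at equilibrium:
at a positive equilibrium `(E_L, E_I)`, the matrix `M = B + [E]⁻¹([BE] + D)` has
the stated block structure and the Schur complement of `M` with respect to the
block `B_II + K_I` equals `[E_L]⁻¹ J_red(E_L)`. -/
theorem linearization_schur_complement {n m : ℕ} (hn : 0 < n) (hm : 0 < m)
    (B : Matrix (Fin n ⊕ Fin m) (Fin n ⊕ Fin m) ℝ) (hB : IsSusceptance B)
    (k : Fin m → ℝ) (hk : ∀ i, k i < 0)
    (EIstar : Fin m → ℝ) (hEIstar : ∀ i, 0 < EIstar i)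
    (hinv1 : IsUnit (B.toBlocks₂₂ + Matrix.diagonal k).det)
    (Bred : Matrix (Fin n) (Fin n) ℝ)
    (hBred : Bred = B.toBlocks₁₁ -
      B.toBlocks₁₂ * (B.toBlocks₂₂ + Matrix.diagonal k)⁻¹ * B.toBlocks₂₁)
    (hinv2 : IsUnit Bred.det)
    (ELstar : Fin n → ℝ)
    (hELstar : ELstar = (-(Bred⁻¹ * B.toBlocks₁₂ *
      (B.toBlocks₂₂ + Matrix.diagonal k)⁻¹ * Matrix.diagonal k)).mulVec EIstar)
    (Q : Fin n → ℝ → ℝ) (EL : Fin n → ℝ) (EI : Fin m → ℝ)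
    (hEL : ∀ i, 0 < EL i) (hEI : ∀ i, 0 < EI i)
    (hdiff : ∀ i, DifferentiableAt ℝ (Q i) (EL i))
    (heq1 : (0 : Fin n → ℝ) = (fun i => Q i (EL i)) +
      (Matrix.diagonal EL).mulVec (B.toBlocks₁₁.mulVec EL + B.toBlocks₁₂.mulVec EI))
    (heq2 : (0 : Fin m → ℝ) =
      (Matrix.diagonal EI).mulVec ((Matrix.diagonal k).mulVec (EI - EIstar)) +
      (Matrix.diagonal EI).mulVec (B.toBlocks₂₁.mulVec EL + B.toBlocks₂₂.mulVec EI)) :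
    let E : Fin n ⊕ Fin m → ℝ := Sum.elim EL EI
    let D : Matrix (Fin n ⊕ Fin m) (Fin n ⊕ Fin m) ℝ :=
      Matrix.diagonal (Sum.elim (fun i => deriv (Q i) (EL i))
        (fun i => k i * (2 * EI i - EIstar i)))
    let M := B + Matrix.diagonal (fun i => (E i)⁻¹) *
      (Matrix.diagonal (B.mulVec E) + D)
    let M11 := Matrix.diagonal (fun i => (EL i)⁻¹) *
        Matrix.diagonal (fun i => deriv (Q i) (EL i)) + B.toBlocks₁₁ +
        Matrix.diagonal (fun i => (EL i)⁻¹) *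
          Matrix.diagonal (Bred.mulVec (EL - ELstar))
    let Jred := Matrix.diagonal (fun i => deriv (Q i) (EL i)) +
      Matrix.diagonal EL * Bred + Matrix.diagonal (Bred.mulVec (EL - ELstar))
    M.toBlocks₁₁ = M11 ∧ M.toBlocks₁₂ = B.toBlocks₁₂ ∧ M.toBlocks₂₁ = B.toBlocks₂₁ ∧
      M.toBlocks₂₂ = B.toBlocks₂₂ + Matrix.diagonal k ∧
      M11 - B.toBlocks₁₂ * (B.toBlocks₂₂ + Matrix.diagonal k)⁻¹ * B.toBlocks₂₁ =
        Matrix.diagonal (fun i => (EL i)⁻¹) * Jred := by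
  --

  intro E D M M11 Jred
  have hMdef : M = B + Matrix.diagonal (fun i => (E i)⁻¹) *
      (Matrix.diagonal (B *ᵥ E) + D) := rfl
  have hM11def : M11 = Matrix.diagonal (fun i => (EL i)⁻¹) *
        Matrix.diagonal (fun i => deriv (Q i) (EL i)) + B.toBlocks₁₁ +
        Matrix.diagonal (fun i => (EL i)⁻¹) *
          Matrix.diagonal (Bred.mulVec (EL - ELstar)) := rfl
  have hJreddef : Jred = Matrix.diagonal (fun i => deriv (Q i) (EL i)) +
      Matrix.diagonal EL * Bred + Matrix.diagonal (Bred.mulVec (EL - ELstar)) := rfl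
  -- pointwise inverter equilibrium
  have hK : ∀ i, k i * (EI i - EIstar i)
      + (B.toBlocks₂₁ *ᵥ EL + B.toBlocks₂₂ *ᵥ EI) i = 0 := by
    intro i
    have h := congrFun heq2 i
    simp only [Pi.add_apply, Pi.zero_apply, Matrix.mulVec_diagonal, Pi.sub_apply] at h
    have hne : EI i ≠ 0 := (hEI i).ne'
    have h' : EI i * (k i * (EI i - EIstar i)
        + ((B.toBlocks₂₁ *ᵥ EL) i + (B.toBlocks₂₂ *ᵥ EI) i)) = 0 := by
      rw [mul_add]; linarith [h]
    have h'' := (mul_eq_zero.mp h').resolve_left hne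
    simpa [Pi.add_apply] using h'' 
  -- vector form
  have hvec : (B.toBlocks₂₂ + Matrix.diagonal k) *ᵥ EI
      = Matrix.diagonal k *ᵥ EIstar - B.toBlocks₂₁ *ᵥ EL := by
    ext i
    have h := hK i
    simp only [Matrix.add_mulVec, Matrix.mulVec_diagonal, Pi.add_apply, Pi.sub_apply] at h ⊢
    linear_combination h
  have hEIexpr : EI = (B.toBlocks₂₂ + Matrix.diagonal k)⁻¹ *ᵥ
      (Matrix.diagonal k *ᵥ EIstar - B.toBlocks₂₁ *ᵥ EL) := by
    rw [← hvec, Matrix.mulVec_mulVec, Matrix.nonsing_inv_mul _ hinv1, Matrix.one_mulVec]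
  have hBredstar : Bred *ᵥ ELstar = -((B.toBlocks₁₂ *
      (B.toBlocks₂₂ + Matrix.diagonal k)⁻¹ * Matrix.diagonal k) *ᵥ EIstar) := by
    rw [hELstar, Matrix.mulVec_mulVec, Matrix.mul_neg, Matrix.neg_mulVec]
    congr 1
    simp only [Matrix.mul_assoc]
    rw [Matrix.mul_nonsing_inv_cancel_left _ _ hinv2]
  have hBEL : B.toBlocks₁₁ *ᵥ EL + B.toBlocks₁₂ *ᵥ EI = Bred *ᵥ (EL - ELstar) := by
    rw [Matrix.mulVec_sub, hBredstar, sub_neg_eq_add, hBred, hEIexpr]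
    simp only [Matrix.mulVec_mulVec, Matrix.mulVec_sub, Matrix.sub_mulVec,
      Matrix.mul_assoc]
    abel
  -- block decomposition of B *ᵥ E
  have hBE : B *ᵥ E = Sum.elim (B.toBlocks₁₁ *ᵥ EL + B.toBlocks₁₂ *ᵥ EI)
      (B.toBlocks₂₁ *ᵥ EL + B.toBlocks₂₂ *ᵥ EI) := by
    conv_lhs => rw [← Matrix.fromBlocks_toBlocks B]
    rw [Matrix.fromBlocks_mulVec]
    rfl
  -- the correction term is a single diagonal matrix
  have hw : M = B + Matrix.diagonal (fun i => (E i)⁻¹ * ((B *ᵥ E) i +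
      Sum.elim (fun i => deriv (Q i) (EL i))
        (fun i => k i * (2 * EI i - EIstar i)) i)) := by
    rw [hMdef]
    congr 1
    rw [Matrix.diagonal_add, Matrix.diagonal_mul_diagonal]
  have hwl : ∀ i, (E (Sum.inl i))⁻¹ * ((B *ᵥ E) (Sum.inl i) +
      Sum.elim (fun i => deriv (Q i) (EL i))
        (fun i => k i * (2 * EI i - EIstar i)) (Sum.inl i))
      = (EL i)⁻¹ * deriv (Q i) (EL i) + (EL i)⁻¹ * (Bred *ᵥ (EL - ELstar)) i := by
    intro i
    rw [hBE]
    simp only [Sum.elim_inl]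
    rw [congrFun hBEL i]
    show (EL i)⁻¹ * _ = _
    ring
  have hwr : ∀ i, (E (Sum.inr i))⁻¹ * ((B *ᵥ E) (Sum.inr i) +
      Sum.elim (fun i => deriv (Q i) (EL i))
        (fun i => k i * (2 * EI i - EIstar i)) (Sum.inr i)) = k i := by
    intro i
    rw [hBE]
    simp only [Sum.elim_inr]
    have hne : EI i ≠ 0 := (hEI i).ne'
    have h2 : (B.toBlocks₂₁ *ᵥ EL + B.toBlocks₂₂ *ᵥ EI) i
        = -(k i * (EI i - EIstar i)) := by linarith [hK i]
    show (EI i)⁻¹ * _ = _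
    rw [h2]
    have h3 : -(k i * (EI i - EIstar i)) + k i * (2 * EI i - EIstar i)
        = EI i * k i := by ring
    rw [h3, inv_mul_cancel_left₀ hne]
  refine ⟨?_, ?_, ?_, ?_, ?_⟩
  · ext i j
    rw [hw, hM11def, Matrix.diagonal_mul_diagonal, Matrix.diagonal_mul_diagonal]
    rcases eq_or_ne i j with rfl | hij
    · simp only [Matrix.toBlocks₁₁, Matrix.of_apply, Matrix.add_apply,
        Matrix.diagonal_apply_eq]
      rw [hwl i]
      ring
    · have h1 : (Sum.inl i : Fin n ⊕ Fin m) ≠ Sum.inl j := by simp [hij]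
      simp [Matrix.toBlocks₁₁, Matrix.diagonal_apply_ne _ h1,
        Matrix.diagonal_apply_ne _ hij]
  · ext i j
    rw [hw]
    simp [Matrix.toBlocks₁₂, Matrix.diagonal_apply_ne]
  · ext i j
    rw [hw]
    simp [Matrix.toBlocks₂₁, Matrix.diagonal_apply_ne]
  · ext i j
    rw [hw]
    rcases eq_or_ne i j with rfl | hij
    · simp only [Matrix.toBlocks₂₂, Matrix.of_apply, Matrix.add_apply,
        Matrix.diagonal_apply_eq]
      rw [hwr i]
    · have h1 : (Sum.inr i : Fin n ⊕ Fin m) ≠ Sum.inr j := by simp [hij]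
      simp [Matrix.toBlocks₂₂, Matrix.diagonal_apply_ne _ h1,
        Matrix.diagonal_apply_ne _ hij]
  · have h1 : (Matrix.diagonal fun i => (EL i)⁻¹) * Matrix.diagonal EL
        = (1 : Matrix (Fin n) (Fin n) ℝ) := by
      have hf : (fun i => (EL i)⁻¹ * EL i) = fun _ : Fin n => (1 : ℝ) :=
        funext fun i => inv_mul_cancel₀ (hEL i).ne'
      rw [Matrix.diagonal_mul_diagonal, hf, Matrix.diagonal_one]
    rw [hM11def, hJreddef, Matrix.mul_add, Matrix.mul_add,
      ← Matrix.mul_assoc (Matrix.diagonal fun i => (EL i)⁻¹) (Matrix.diagonal EL) Bred,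
      h1, Matrix.one_mul, hBred]
    abel
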